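/- Fix r ≥ 1. The intersection over all s ≥ 1 of the images σ_{r,s}(M_{r+s}) ⊆ A_r equals {0}. (Equivalently, for every nonzero polynomial f ∈ A_r with zero constant term there exists s ≥ 1 such that f does not lie in the image of the composite σ_{r,s} restricted to the ideal M_{r+s}; indeed any nonzero element of σ_{r,s}(M_{r+s}) has degree at least p^s.) -/

import Mathlib

open MvPolynomial

/-- The map `π_s : A_{s+1} = k[T_0,…,T_s] → A_s = k[T_0,…,T_{s-1}]` with
`π_s(T_ℓ) = T_ℓ^p` for `0 ≤ ℓ < s` and `π_s(T_s) = 0` (the map `(−)^{[p]}` of the paper). -/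
noncomputable def piMap (k : Type*) [CommRing k] (p s : ℕ) :
    MvPolynomial (Fin (s + 1)) k →ₐ[k] MvPolynomial (Fin s) k :=
  aeval fun ℓ : Fin (s + 1) =>
    if h : (ℓ : ℕ) < s then (X (⟨ℓ, h⟩ : Fin s) : MvPolynomial (Fin s) k) ^ p else 0

/-- The composite `σ_{r,s} = π_r ∘ π_{r+1} ∘ ⋯ ∘ π_{r+s-1} : A_{r+s} → A_r`
(with `σ_{r,0} = id`). -/
noncomputable def sigmaMap (k : Type*) [CommRing k] (p r : ℕ) :
    (s : ℕ) → (MvPolynomial (Fin (r + s)) k →ₐ[k] MvPolynomial (Fin r) k)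
  | 0 => AlgHom.id k _
  | s + 1 => (sigmaMap k p r s).comp (piMap k p (r + s))

/-- `M_t ⊆ A_t` is the ideal generated by the variables `T_0,…,T_{t-1}`. -/
noncomputable def Mideal (k : Type*) [CommRing k] (t : ℕ) :
    Ideal (MvPolynomial (Fin t) k) :=
  Ideal.span (Set.range (X : Fin t → MvPolynomial (Fin t) k))

lemma sigmaMap_X (k : Type*) [CommRing k] (p : ℕ) (hp : 0 < p) (r s : ℕ)
    (i : Fin (r + s)) :
    sigmaMap k p r s (X i) =
      if h : (i : ℕ) < r then (X (⟨i, h⟩ : Fin r) : MvPolynomial (Fin r) k) ^ p ^ s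
      else 0 := by
  induction s with
  | zero =>
    have h : (i : ℕ) < r := i.isLt
    simp [sigmaMap, h]
  | succ s ih =>
    show sigmaMap k p r s (piMap k p (r + s) (X i)) = _
    rw [piMap, aeval_X]
    by_cases h : (i : ℕ) < r + s
    · rw [dif_pos h, map_pow, ih ⟨i, h⟩]
      by_cases h' : (i : ℕ) < r
      · rw [dif_pos h', dif_pos h', ← pow_mul, ← pow_succ]
      · rw [dif_neg h', dif_neg h', zero_pow hp.ne']
    · rw [dif_neg h, map_zero]
      have h' : ¬ (i : ℕ) < r := fun hh => h (hh.trans_le (Nat.le_add_right r s))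
      rw [dif_neg h']

lemma mem_span_of_mem_image (k : Type*) [CommRing k] (p : ℕ) (hp : 0 < p) (r s : ℕ)
    (g : MvPolynomial (Fin (r + s)) k) (hg : g ∈ Mideal k (r + s)) :
    sigmaMap k p r s g ∈
      Ideal.span ((fun m => (monomial m (1 : k) : MvPolynomial (Fin r) k)) ''
        (Set.range fun j : Fin r => Finsupp.single j (p ^ s))) := by
  have h1 : sigmaMap k p r s g ∈ (Mideal k (r + s)).map (sigmaMap k p r s).toRingHom :=
    Ideal.mem_map_of_mem _ hg
  rw [Mideal, Ideal.map_span] at h1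
  refine Ideal.span_le.mpr ?_ h1
  rintro _ ⟨_, ⟨i, rfl⟩, rfl⟩
  simp only [AlgHom.toRingHom_eq_coe, RingHom.coe_coe, SetLike.mem_coe]
  rw [sigmaMap_X k p hp r s i]
  by_cases h : (i : ℕ) < r
  · rw [dif_pos h, X_pow_eq_monomial]
    exact Ideal.subset_span ⟨Finsupp.single ⟨i, h⟩ (p ^ s), ⟨⟨i, h⟩, rfl⟩, rfl⟩
  · rw [dif_neg h]; exact Ideal.zero_mem _

/-- For fixed `r ≥ 1`, the intersection over all `s ≥ 1` of the images
`σ_{r,s}(M_{r+s}) ⊆ A_r` equals `{0}`. -/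
theorem stmt_18 (k : Type*) [Field k] (p : ℕ) (hp : p.Prime)
    (hp2 : 2 < p) [CharP k p] (r : ℕ) (hr : 1 ≤ r) :
    (⋂ s : ℕ, ⋂ _ : 1 ≤ s,
      (sigmaMap k p r s) '' ((Mideal k (r + s) : Ideal (MvPolynomial (Fin (r + s)) k)) :
        Set (MvPolynomial (Fin (r + s)) k))) = {0} := by
  ext f
  simp only [Set.mem_iInter, Set.mem_singleton_iff]
  constructor
  · intro hf
    by_contra hne
    set t := f.totalDegree + 1 with ht
    have ht1 : 1 ≤ t := Nat.le_add_left _ _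
    have hst : f.totalDegree < p ^ t :=
      lt_trans (Nat.lt_succ_self _) (Nat.lt_pow_self hp.one_lt : t < p ^ t)
    obtain ⟨g, hg, hfg⟩ := hf t ht1
    have h2 := mem_span_of_mem_image k p hp.pos r t g hg
    rw [hfg] at h2
    rw [mem_ideal_span_monomial_image] at h2
    obtain ⟨m, hm⟩ := support_nonempty.mpr hne
    obtain ⟨_, ⟨j, rfl⟩, hle⟩ := h2 m hm
    have h3 : p ^ t ≤ m j := Finsupp.single_le_iff.mp hle
    have h4 : m j ≤ f.totalDegree := by
      calc m j ≤ m.sum fun _ n => n := by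
            by_cases hj : j ∈ m.support
            · exact Finset.single_le_sum (fun _ _ => Nat.zero_le _) hj
            · simp [Finsupp.notMem_support_iff.mp hj]
        _ ≤ f.totalDegree := le_totalDegree hm
    omega
  · rintro rfl s _
    exact ⟨0, (Mideal k (r + s)).zero_mem, map_zero _⟩
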